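/- arXiv:1701.00901 — 2 statements merged into one kernel-verified Lean document; each statement's English description precedes it below -/
import Mathlib

section
/- Let n ≥ 1, α > -1, and φ(x) = x‖x‖^α. Then for every nonnegative measurable function g : ℝⁿ → ℝ, ∫_{ℝⁿ} g(φ(x)) (1+α) ‖x‖^{αn} dx = ∫_{ℝⁿ} g(y) dy. -/
open MeasureTheory Real

theorem aux_deriv {n : ℕ} (α : ℝ) (x : EuclideanSpace ℝ (Fin n)) (hx : x ≠ 0) :
    HasFDerivAt (fun y : EuclideanSpace ℝ (Fin n) => ‖y‖ ^ α • y)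
      ((‖x‖ ^ α) • ContinuousLinearMap.id ℝ _ +
        ((α * ‖x‖ ^ (α - 2)) • (innerSL ℝ x)).smulRight x) x := by
  have hx0 : (0:ℝ) < ‖x‖ := norm_pos_iff.2 hx
  have h2 : HasFDerivAt (fun y : EuclideanSpace ℝ (Fin n) => ‖y‖ ^ (2:ℝ))
      ((2 * ‖x‖ ^ ((2:ℝ) - 2)) • innerSL ℝ x) x := hasFDerivAt_norm_rpow x one_lt_two
  have hne : ‖x‖ ^ (2:ℝ) ≠ 0 := by positivity
  have h3 := (Real.hasDerivAt_rpow_const (x := ‖x‖ ^ (2:ℝ)) (p := α/2) (Or.inl hne)).comp_hasFDerivAt x h2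
  have heq : ((fun t : ℝ => t ^ (α/2)) ∘ fun y : EuclideanSpace ℝ (Fin n) => ‖y‖ ^ (2:ℝ)) = fun y => ‖y‖ ^ α := by
    funext y
    simp only [Function.comp]
    rw [← Real.rpow_mul (norm_nonneg y)]
    congr 1; ring
  rw [heq] at h3
  have hc : HasFDerivAt (fun y : EuclideanSpace ℝ (Fin n) => ‖y‖ ^ α)
      ((α * ‖x‖ ^ (α - 2)) • innerSL ℝ x) x := by
    refine h3.congr_fderiv ?_
    have e1 : (‖x‖ ^ (2:ℝ)) ^ (α/2 - 1) = ‖x‖ ^ (α - 2) := by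
      rw [← Real.rpow_mul (norm_nonneg x)]; congr 1; ring
    have e2 : ‖x‖ ^ ((2:ℝ) - 2) = 1 := by norm_num
    rw [smul_smul, e1, e2]
    congr 1; ring
  have := hc.smul (hasFDerivAt_id x)
  exact this


theorem aux_det {n : ℕ} (α : ℝ) (x : EuclideanSpace ℝ (Fin n)) (hx : x ≠ 0) :
    ContinuousLinearMap.det ((‖x‖ ^ α) • ContinuousLinearMap.id ℝ (EuclideanSpace ℝ (Fin n)) +
      ((α * ‖x‖ ^ (α - 2)) • (innerSL ℝ x)).smulRight x) = (1 + α) * ‖x‖ ^ (α * n) := by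
  classical
  have hx0 : (0:ℝ) < ‖x‖ := norm_pos_iff.2 hx
  set b := stdOrthonormalBasis ℝ (EuclideanSpace ℝ (Fin n)) with hb
  set N := Module.finrank ℝ (EuclideanSpace ℝ (Fin n)) with hN
  have hNn : N = n := finrank_euclideanSpace_fin
  set w : Fin N → ℝ := fun i => b.repr x i with hw
  set u : Fin N → ℝ := fun i => (α * ‖x‖ ^ (-2:ℝ)) * w i with hu
  have hM : LinearMap.toMatrix b.toBasis b.toBasis
      (((‖x‖ ^ α) • ContinuousLinearMap.id ℝ (EuclideanSpace ℝ (Fin n)) +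
        ((α * ‖x‖ ^ (α - 2)) • (innerSL ℝ x)).smulRight x) : _ →ₗ[ℝ] _)
      = (‖x‖ ^ α) • (1 + Matrix.replicateCol Unit u * Matrix.replicateRow Unit w) := by
    ext i j
    have hinner : (inner ℝ x (b j) : ℝ) = b.repr x j := by
      rw [real_inner_comm]; exact (b.repr_apply_apply x j).symm
    have h2 : ‖x‖ ^ (α - 2) = ‖x‖ ^ α * ‖x‖ ^ (-2:ℝ) := by
      rw [sub_eq_add_neg, Real.rpow_add hx0]
    simp only [LinearMap.toMatrix_apply, Matrix.smul_apply, Matrix.add_apply, Matrix.one_apply,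
      Matrix.mul_apply, Matrix.replicateCol_apply, Matrix.replicateRow_apply, Finset.univ_unique,
      Finset.sum_singleton, hu, hw, OrthonormalBasis.coe_toBasis,
      OrthonormalBasis.coe_toBasis_repr_apply, ContinuousLinearMap.coe_coe,
      ContinuousLinearMap.add_apply, ContinuousLinearMap.smul_apply,
      ContinuousLinearMap.id_apply, ContinuousLinearMap.smulRight_apply, innerSL_apply_apply,
      map_add, _root_.map_smul, LinearMap.add_apply, LinearMap.smul_apply, hinner,
      OrthonormalBasis.repr_self, EuclideanSpace.single_apply, PiLp.add_apply,
      PiLp.smul_apply, smul_eq_mul, h2]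
    rcases eq_or_ne i j with h | h
    · subst h; simp; ring
    · simp [h]; ring
  have hdet : ContinuousLinearMap.det ((‖x‖ ^ α) • ContinuousLinearMap.id ℝ (EuclideanSpace ℝ (Fin n)) +
      ((α * ‖x‖ ^ (α - 2)) • (innerSL ℝ x)).smulRight x)
      = (‖x‖ ^ α) ^ N * (1 + dotProduct w u) := by
    rw [ContinuousLinearMap.det, ← LinearMap.det_toMatrix b.toBasis, hM, Matrix.det_smul,
      Matrix.det_one_add_replicateCol_mul_replicateRow]
    simp
  rw [hdet]
  have hsum : ∑ i, w i * w i = ‖x‖ ^ (2:ℕ) := by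
    have h1 : ‖b.repr x‖ = ‖x‖ := b.repr.norm_map x
    rw [EuclideanSpace.norm_eq] at h1
    rw [← h1, Real.sq_sqrt (by positivity)]
    exact Finset.sum_congr rfl fun i _ => by rw [Real.norm_eq_abs, sq_abs, sq, hw]
  have hdot : dotProduct w u = α := by
    rw [dotProduct]
    have h3 : ∑ i, w i * u i = (α * ‖x‖ ^ (-2:ℝ)) * ∑ i, w i * w i := by
      rw [Finset.mul_sum]; exact Finset.sum_congr rfl fun i _ => by rw [hu]; ring
    rw [h3, hsum]
    have h4 : (‖x‖ : ℝ) ^ (2:ℕ) = ‖x‖ ^ (2:ℝ) := (Real.rpow_natCast _ 2).symm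
    rw [h4, mul_assoc, ← Real.rpow_add hx0]
    norm_num
  rw [hdot, hNn]
  rw [← Real.rpow_natCast (‖x‖ ^ α) n, ← Real.rpow_mul (norm_nonneg x)]
  ring


theorem aux_norm_eq {E : Type*} [NormedAddCommGroup E] [NormedSpace ℝ E] (α : ℝ) (hα : α + 1 ≠ 0) (x : E) :
    ‖(‖x‖ ^ α • x : E)‖ = ‖x‖ ^ (α + 1) := by
  rcases eq_or_ne x 0 with rfl | hx
  · simp [Real.zero_rpow hα]
  · have hx0 : (0:ℝ) < ‖x‖ := norm_pos_iff.2 hx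
    rw [norm_smul, Real.norm_eq_abs, abs_of_nonneg (Real.rpow_nonneg (norm_nonneg x) α),
      Real.rpow_add_one hx0.ne']

theorem aux_inj {n : ℕ} (α : ℝ) (hα : -1 < α) :
    Set.InjOn (fun y : EuclideanSpace ℝ (Fin n) => ‖y‖ ^ α • y) {(0:EuclideanSpace ℝ (Fin n))}ᶜ := by
  intro x hx y hy hxy
  simp only [Set.mem_compl_iff, Set.mem_singleton_iff] at hx hy
  have hx0 : (0:ℝ) < ‖x‖ := norm_pos_iff.2 hx
  have hy0 : (0:ℝ) < ‖y‖ := norm_pos_iff.2 hy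
  have hα1 : α + 1 ≠ 0 := by linarith
  have hxy' : ‖x‖ ^ α • x = ‖y‖ ^ α • y := hxy
  have h1 : ‖x‖ ^ (α + 1) = ‖y‖ ^ (α + 1) := by
    rw [← aux_norm_eq α hα1 x, ← aux_norm_eq α hα1 y, hxy']
  have h2 : ‖x‖ = ‖y‖ := by
    have := congrArg (fun t : ℝ => t ^ (α + 1)⁻¹) h1
    simpa [← Real.rpow_mul hx0.le, ← Real.rpow_mul hy0.le, mul_inv_cancel₀ hα1] using this
  have h3 : ‖x‖ ^ α ≠ 0 := (Real.rpow_pos_of_pos hx0 α).ne'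
  have : ‖x‖ ^ α • x = ‖x‖ ^ α • y := by rw [hxy', h2]
  exact smul_right_injective _ h3 this

theorem aux_image {n : ℕ} (α : ℝ) (hα : -1 < α) :
    (fun y : EuclideanSpace ℝ (Fin n) => ‖y‖ ^ α • y) '' {(0:EuclideanSpace ℝ (Fin n))}ᶜ
      = {(0:EuclideanSpace ℝ (Fin n))}ᶜ := by
  apply Set.Subset.antisymm
  · rintro _ ⟨x, hx, rfl⟩
    simp only [Set.mem_compl_iff, Set.mem_singleton_iff] at hx ⊢
    exact smul_ne_zero (Real.rpow_pos_of_pos (norm_pos_iff.2 hx) α).ne' hx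
  · intro y hy
    simp only [Set.mem_compl_iff, Set.mem_singleton_iff] at hy
    have hy0 : (0:ℝ) < ‖y‖ := norm_pos_iff.2 hy
    set β := -α / (1 + α) with hβ
    have hα1 : (1:ℝ) + α ≠ 0 := by linarith
    have hβα : (β + 1) * α + β = 0 := by
      rw [hβ, div_add_one hα1, div_mul_eq_mul_div, ← add_div, div_eq_zero_iff]
      left; ring
    refine ⟨‖y‖ ^ β • y, ?_, ?_⟩
    · simp only [Set.mem_compl_iff, Set.mem_singleton_iff]
      exact smul_ne_zero (Real.rpow_pos_of_pos hy0 β).ne' hy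
    · have hβ1 : β + 1 ≠ 0 := by
        intro h
        have : β = -1 := by linarith
        rw [this] at hβα
        have : α = 1 + α := by linarith [hβα]
        linarith
      have hn : ‖(‖y‖ ^ β • y : EuclideanSpace ℝ (Fin n))‖ = ‖y‖ ^ (β + 1) := aux_norm_eq β hβ1 y
      show ‖(‖y‖ ^ β • y : EuclideanSpace ℝ (Fin n))‖ ^ α • ‖y‖ ^ β • y = y
      rw [hn, smul_smul, ← Real.rpow_mul (norm_nonneg y), ← Real.rpow_add hy0, hβα,
        Real.rpow_zero, one_smul]


/-- change of variables for `φ(x) = x‖x‖^α`: for every nonnegative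
measurable `g`, `∫ g(φ x) (1+α)‖x‖^(αn) dx = ∫ g(y) dy`. -/
theorem stmt11 (n : ℕ) (hn : 1 ≤ n) (α : ℝ) (hα : -1 < α)
    (g : EuclideanSpace ℝ (Fin n) → ℝ) (hg : Measurable g) (hg0 : ∀ y, 0 ≤ g y) :
    ∫⁻ x, ENNReal.ofReal (g (‖x‖ ^ α • x) * ((1 + α) * ‖x‖ ^ (α * n))) =
      ∫⁻ y, ENNReal.ofReal (g y) := by
  haveI : Nontrivial (EuclideanSpace ℝ (Fin n)) :=
    ⟨⟨EuclideanSpace.single ⟨0, hn⟩ 1, 0, by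
      intro h; simpa using congrArg (fun v => v ⟨0, hn⟩) h⟩⟩
  set s : Set (EuclideanSpace ℝ (Fin n)) := {0}ᶜ with hs
  have hsm : MeasurableSet s := (measurableSet_singleton 0).compl
  have hsu : s =ᵐ[volume] Set.univ := by
    rw [ae_eq_univ, hs, compl_compl]
    exact measure_singleton 0
  have key := lintegral_image_eq_lintegral_abs_det_fderiv_mul (volume) hsm
      (f' := fun x => (‖x‖ ^ α) • ContinuousLinearMap.id ℝ _ +
        ((α * ‖x‖ ^ (α - 2)) • (innerSL ℝ x)).smulRight x)
      (fun x hx => (aux_deriv α x (by simpa [hs] using hx)).hasFDerivWithinAt)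
      (aux_inj α hα) (fun y => ENNReal.ofReal (g y))
  rw [show (fun y : EuclideanSpace ℝ (Fin n) => ‖y‖ ^ α • y) '' s = s from aux_image α hα] at key
  calc ∫⁻ x, ENNReal.ofReal (g (‖x‖ ^ α • x) * ((1 + α) * ‖x‖ ^ (α * n)))
      = ∫⁻ x in s, ENNReal.ofReal (g (‖x‖ ^ α • x) * ((1 + α) * ‖x‖ ^ (α * n))) := by
        rw [← setLIntegral_univ]; exact (setLIntegral_congr hsu).symm
    _ = ∫⁻ x in s, ENNReal.ofReal
          |ContinuousLinearMap.det ((‖x‖ ^ α) • ContinuousLinearMap.id ℝ (EuclideanSpace ℝ (Fin n)) +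
            ((α * ‖x‖ ^ (α - 2)) • (innerSL ℝ x)).smulRight x)| * ENNReal.ofReal (g (‖x‖ ^ α • x)) := by
        apply setLIntegral_congr_fun hsm
        intro x hx
        have hx0 : x ≠ 0 := by simpa [hs] using hx
        beta_reduce
        rw [aux_det α x hx0, abs_of_nonneg (mul_nonneg (by linarith) (Real.rpow_nonneg (norm_nonneg x) _)),
          ENNReal.ofReal_mul (hg0 _), mul_comm]
    _ = ∫⁻ y in s, ENNReal.ofReal (g y) := key.symm
    _ = ∫⁻ y, ENNReal.ofReal (g y) := (setLIntegral_congr hsu).trans (setLIntegral_univ _)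
end

section
/- Let n ≥ 1 and α > -1. For every p ∈ [1, ∞) and every measurable f : ℝⁿ → ℝ, ∫_{ℝⁿ} |f(x‖x‖^α)|^p (1+α) ‖x‖^{αn} dx = ∫_{ℝⁿ} |f(y)|^p dy. In particular, the weighted L^p norm of f∘φ with weight (1+α)‖x‖^{αn} equals the unweighted L^p norm of f. -/
open MeasureTheory Set Metric
open scoped ENNReal

/-- 1D change of variables `s = r^(1+α)` for lower Lebesgue integrals on `(0,∞)`. -/
lemma stmt12_aux_one_dim (α : ℝ) (hα : -1 < α) (G : ℝ → ℝ≥0∞) :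
    ∫⁻ s in Ioi (0:ℝ), G s
      = ∫⁻ r in Ioi (0:ℝ), ENNReal.ofReal ((1+α) * r ^ α) * G (r ^ (1+α)) := by
  have h1 : (0:ℝ) < 1 + α := by linarith
  have hli : ∀ r ∈ Ioi (0:ℝ), ((r : ℝ) ^ (1+α)) ^ (1+α)⁻¹ = r := fun r hr => by
    rw [← Real.rpow_mul (le_of_lt hr), mul_inv_cancel₀ h1.ne', Real.rpow_one]
  have himg : (fun r : ℝ => r ^ (1+α)) '' Ioi 0 = Ioi 0 := by
    ext a
    constructor
    · rintro ⟨r, hr, rfl⟩; exact Real.rpow_pos_of_pos hr _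
    · intro ha
      exact ⟨a ^ (1+α)⁻¹, Real.rpow_pos_of_pos ha _, by
        show (a ^ (1+α)⁻¹) ^ (1+α) = a
        rw [← Real.rpow_mul (le_of_lt ha), inv_mul_cancel₀ h1.ne', Real.rpow_one]⟩
  have hinj : InjOn (fun r : ℝ => r ^ (1+α)) (Ioi 0) := fun a ha b hb h => by
    rw [← hli a ha, ← hli b hb]; simp only at h; rw [h]
  have hderiv : ∀ r ∈ Ioi (0:ℝ), HasFDerivWithinAt (fun x : ℝ => x ^ (1+α))
      ((1 : ℝ →L[ℝ] ℝ).smulRight ((1+α) * r ^ α)) (Ioi 0) r := by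
    intro r hr
    have := (Real.hasDerivAt_rpow_const (p := 1+α) (Or.inl (ne_of_gt hr))).hasDerivWithinAt
      (s := Ioi (0:ℝ))
    rw [ContinuousLinearMap.smulRight_one_eq_toSpanSingleton]
    simpa [add_sub_cancel_left] using this.hasFDerivWithinAt
  calc ∫⁻ s in Ioi (0:ℝ), G s
      = ∫⁻ s in (fun r : ℝ => r ^ (1+α)) '' Ioi 0, G s := by rw [himg]
    _ = ∫⁻ r in Ioi (0:ℝ), ENNReal.ofReal ((1+α) * r ^ α) * G (r ^ (1+α)) := by
        rw [lintegral_image_eq_lintegral_abs_det_fderiv_mul volume measurableSet_Ioi hderiv hinj G]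
        refine setLIntegral_congr_fun measurableSet_Ioi (fun r hr => ?_)
        have hr' : (0:ℝ) < r := hr
        rw [ContinuousLinearMap.smulRight_one_eq_toSpanSingleton,
          ContinuousLinearMap.det_toSpanSingleton, abs_of_nonneg (by positivity)]

/-- Polar decomposition of a lower Lebesgue integral w.r.t. an additive Haar measure. -/
lemma stmt12_aux_polar {E : Type*} [NormedAddCommGroup E] [NormedSpace ℝ E] [MeasurableSpace E]
    [BorelSpace E] [FiniteDimensional ℝ E] [Nontrivial E] (μ : Measure E) [μ.IsAddHaarMeasure]
    (F : E → ℝ≥0∞) :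
    ∫⁻ x, F x ∂μ
      = ∫⁻ z : sphere (0:E) 1 × Ioi (0:ℝ), F (z.2.1 • z.1.1)
          ∂(μ.toSphere.prod (Measure.volumeIoiPow (Module.finrank ℝ E - 1))) := by
  rw [← μ.measurePreserving_homeomorphUnitSphereProd.lintegral_comp_emb
    (Homeomorph.measurableEmbedding _) (fun z => F (z.2.1 • z.1.1))]
  have key : ∀ a : ({0}ᶜ : Set E),
      F (((homeomorphUnitSphereProd E) a).2.1 • ((homeomorphUnitSphereProd E) a).1.1) = F a := by
    intro a
    have ha : (a : E) ≠ 0 := a.2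
    simp [homeomorphUnitSphereProd, smul_inv_smul₀ (norm_ne_zero_iff.2 ha)]
  rw [lintegral_congr key, lintegral_subtype_comap (MeasurableSet.singleton 0).compl F,
    restrict_compl_singleton (μ := μ) (0 : E)]

/-- the weighted `L^p` norm of `f ∘ φ` with weight `(1+α)‖x‖^(αn)`
equals the unweighted `L^p` norm of `f`, for `φ(x) = x‖x‖^α`, `α > -1`. -/
theorem stmt12 (n : ℕ) (hn : 1 ≤ n) (α : ℝ) (hα : -1 < α)
    (p : ℝ) (hp : 1 ≤ p)
    (f : EuclideanSpace ℝ (Fin n) → ℝ) (hf : Measurable f) :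
    ∫⁻ x, ENNReal.ofReal (|f (‖x‖ ^ α • x)| ^ p * ((1 + α) * ‖x‖ ^ (α * n))) =
      ∫⁻ y, ENNReal.ofReal (|f y| ^ p) := by
  haveI : Nonempty (Fin n) := ⟨⟨0, hn⟩⟩
  haveI : Nontrivial (EuclideanSpace ℝ (Fin n)) := inferInstance
  have h1 : (0:ℝ) < 1 + α := by linarith
  set g : EuclideanSpace ℝ (Fin n) → ℝ≥0∞ := fun y => ENNReal.ofReal (|f y| ^ p) with hg
  set F : EuclideanSpace ℝ (Fin n) → ℝ≥0∞ :=
    fun x => g (‖x‖ ^ α • x) * ENNReal.ofReal ((1 + α) * ‖x‖ ^ (α * n)) with hF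
  have hgm : Measurable g := by
    apply ENNReal.measurable_ofReal.comp
    fun_prop
  have hFm : Measurable F := by
    refine Measurable.mul (hgm.comp ?_) (ENNReal.measurable_ofReal.comp ?_) <;> fun_prop
  have step0 : ∀ x : EuclideanSpace ℝ (Fin n),
      ENNReal.ofReal (|f (‖x‖ ^ α • x)| ^ p * ((1 + α) * ‖x‖ ^ (α * n))) = F x := by
    intro x
    rw [hF, hg]
    rw [ENNReal.ofReal_mul (Real.rpow_nonneg (abs_nonneg _) p)]
  rw [lintegral_congr step0]
  rw [stmt12_aux_polar volume F, stmt12_aux_polar volume g]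
  rw [finrank_euclideanSpace_fin]
  have hFam : Measurable fun z : sphere (0:EuclideanSpace ℝ (Fin n)) 1 × Ioi (0:ℝ) =>
      F (z.2.1 • z.1.1) :=
    hFm.comp (((continuous_subtype_val.comp continuous_snd).smul
      (continuous_subtype_val.comp continuous_fst)).measurable)
  have hgam : Measurable fun z : sphere (0:EuclideanSpace ℝ (Fin n)) 1 × Ioi (0:ℝ) =>
      g (z.2.1 • z.1.1) :=
    hgm.comp (((continuous_subtype_val.comp continuous_snd).smul
      (continuous_subtype_val.comp continuous_fst)).measurable)
  rw [lintegral_prod _ hFam.aemeasurable, lintegral_prod _ hgam.aemeasurable]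
  refine lintegral_congr fun θ => ?_
  have hθ : ‖(θ : EuclideanSpace ℝ (Fin n))‖ = 1 := mem_sphere_zero_iff_norm.1 θ.2
  have hFb : Measurable fun r : Ioi (0:ℝ) => F (r.1 • (θ : EuclideanSpace ℝ (Fin n))) :=
    hFm.comp (measurable_subtype_coe.smul measurable_const)
  have hgb : Measurable fun r : Ioi (0:ℝ) => g (r.1 • (θ : EuclideanSpace ℝ (Fin n))) :=
    hgm.comp (measurable_subtype_coe.smul measurable_const)
  simp only [Measure.volumeIoiPow]
  rw [lintegral_withDensity_eq_lintegral_mul _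
      ((measurable_subtype_coe.pow_const _).ennreal_ofReal) hFb,
    lintegral_withDensity_eq_lintegral_mul _
      ((measurable_subtype_coe.pow_const _).ennreal_ofReal) hgb]
  simp only [Pi.mul_apply]
  rw [lintegral_subtype_comap measurableSet_Ioi
      (fun r : ℝ => ENNReal.ofReal (r ^ (n-1)) * F (r • (θ : EuclideanSpace ℝ (Fin n)))),
    lintegral_subtype_comap measurableSet_Ioi
      (fun r : ℝ => ENNReal.ofReal (r ^ (n-1)) * g (r • (θ : EuclideanSpace ℝ (Fin n))))]
  rw [stmt12_aux_one_dim α hα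
    (fun s => ENNReal.ofReal (s ^ (n-1)) * g (s • (θ : EuclideanSpace ℝ (Fin n))))]
  refine setLIntegral_congr_fun measurableSet_Ioi (fun r hr => ?_)
  have hr' : (0:ℝ) < r := hr
  have hnorm : ‖r • (θ : EuclideanSpace ℝ (Fin n))‖ = r := by
    rw [norm_smul, hθ, Real.norm_eq_abs, abs_of_pos hr', mul_one]
  have hφ : (‖r • (θ : EuclideanSpace ℝ (Fin n))‖ ^ α) • (r • (θ : EuclideanSpace ℝ (Fin n)))
      = (r ^ (1+α)) • (θ : EuclideanSpace ℝ (Fin n)) := by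
    rw [hnorm, smul_smul,
      show r ^ α * r = r ^ (1+α) by rw [Real.rpow_add hr', Real.rpow_one]; ring]
  rw [hF]
  simp only []
  rw [hφ, hnorm]
  have hcast : ((n - 1 : ℕ) : ℝ) = (n : ℝ) - 1 := by
    push_cast [Nat.cast_sub hn]; ring
  have hreal : r ^ (n-1 : ℕ) * ((1 + α) * r ^ (α * n))
      = (1 + α) * r ^ α * (r ^ (1+α)) ^ (n-1 : ℕ) := by
    have hexp : α + (1+α) * ((n:ℝ)-1) = ((n:ℝ)-1) + α * n := by ring
    rw [← Real.rpow_natCast r (n-1), ← Real.rpow_natCast (r ^ (1+α)) (n-1),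
      ← Real.rpow_mul (le_of_lt hr'), hcast, mul_assoc, ← Real.rpow_add hr', hexp,
      Real.rpow_add hr']
    ring
  calc ENNReal.ofReal (r ^ (n-1 : ℕ)) *
        (g ((r ^ (1+α)) • (θ : EuclideanSpace ℝ (Fin n)))
          * ENNReal.ofReal ((1 + α) * r ^ (α * n)))
      = ENNReal.ofReal (r ^ (n-1 : ℕ) * ((1 + α) * r ^ (α * n)))
          * g ((r ^ (1+α)) • (θ : EuclideanSpace ℝ (Fin n))) := by
        rw [ENNReal.ofReal_mul (by positivity : (0:ℝ) ≤ r ^ (n-1 : ℕ)),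
          mul_comm (g ((r ^ (1+α)) • (θ : EuclideanSpace ℝ (Fin n)))), ← mul_assoc]
    _ = ENNReal.ofReal ((1 + α) * r ^ α * (r ^ (1+α)) ^ (n-1 : ℕ))
          * g ((r ^ (1+α)) • (θ : EuclideanSpace ℝ (Fin n))) := by rw [hreal]
    _ = ENNReal.ofReal ((1 + α) * r ^ α) *
          (ENNReal.ofReal ((r ^ (1+α)) ^ (n-1 : ℕ))
            * g ((r ^ (1+α)) • (θ : EuclideanSpace ℝ (Fin n)))) := by
        rw [ENNReal.ofReal_mul (by positivity : (0:ℝ) ≤ (1 + α) * r ^ α), mul_assoc]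
end
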